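/- The Bol operator ∂^k is equivariant for the projective subalgebra: for every k ∈ ℕ, every X ∈ {∂, x∂, x²∂}, and every polynomial f ∈ ℂ[x], ∂^k(L_{(1−k)/2}(X)f) = L_{(1+k)/2}(X)(∂^k f), where L_ν(g∂)f = g·f′ + ν·g′·f. -/

import Mathlib

open Polynomial

private lemma iter_add (n : ℕ) (p q : Polynomial ℂ) :
    derivative^[n] (p + q) = derivative^[n] p + derivative^[n] q := by
  induction n generalizing p q with
  | zero => simp
  | succ m ih => simp [Function.iterate_succ_apply, ih]

private lemma aux_shift (k : ℕ) (c : ℂ) (p : Polynomial ℂ) :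
    C ((k : ℂ) * c) * derivative^[k - 1] (derivative p)
      = C ((k : ℂ) * c) * derivative^[k] p := by
  cases k with
  | zero => simp
  | succ n => rw [Nat.succ_sub_one, ← Function.iterate_succ_apply]

private lemma aux_X (k : ℕ) (a : ℂ) (p : Polynomial ℂ) :
    derivative^[k] (X * derivative p + C a * p)
      = X * derivative^[k] (derivative p) + C (a + k) * derivative^[k] p := by
  induction k generalizing a p with
  | zero => simp
  | succ n ih =>
      rw [Function.iterate_succ_apply, Function.iterate_succ_apply,
        Function.iterate_succ_apply]
      have h : derivative (X * derivative p + C a * p)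
          = X * derivative (derivative p) + C (a + 1) * derivative p := by
        simp [derivative_mul]; ring
      rw [h, ih (a + 1) (derivative p)]
      push_cast
      ring_nf

private lemma aux_X2 (k : ℕ) (a : ℂ) (p : Polynomial ℂ) :
    derivative^[k] (X ^ 2 * derivative p + C a * X * p)
      = X ^ 2 * derivative^[k] (derivative p)
        + C (a + 2 * k) * X * derivative^[k] p
        + C ((k : ℂ) * (a + ((k : ℂ) - 1))) * derivative^[k - 1] p := by
  induction k generalizing a p with
  | zero => simp
  | succ n ih =>
      rw [Function.iterate_succ_apply, Function.iterate_succ_apply]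
      have h : derivative (X ^ 2 * derivative p + C a * X * p)
          = (X ^ 2 * derivative (derivative p) + C (a + 2) * X * derivative p)
              + C a * p := by
        simp [derivative_mul]; rw [show (C 2 : Polynomial ℂ) = 2 from map_ofNat C 2]; ring
      rw [h, iter_add, ih (a + 2) (derivative p), aux_shift n (a + 2 + ((n : ℂ) - 1)) p,
        iterate_derivative_C_mul, Nat.succ_sub_one]
      simp only [← Function.iterate_succ_apply, Nat.succ_eq_add_one]
      push_cast
      ring_nf
      rw [show (a + a * (n : ℂ) + n + n ^ 2) = (a * n + n + n ^ 2) + a by ring,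
        show C (a * (n:ℂ) + n + n ^ 2 + a) = C (a * (n:ℂ) + n + n ^ 2) + C a from C_add]
      ring

theorem bol_equivariant (k : ℕ) (g : Polynomial ℂ)
    (hg : g ∈ ({X, X ^ 2, 1} : Set (Polynomial ℂ))) (f : Polynomial ℂ) :
    derivative^[k] (g * derivative f + C ((1 - (k : ℂ)) / 2) * derivative g * f)
      = g * derivative (derivative^[k] f)
        + C ((1 + (k : ℂ)) / 2) * derivative g * derivative^[k] f := by
  have hcomm : derivative^[k] (derivative f) = derivative (derivative^[k] f) := by
    rw [← Function.iterate_succ_apply, Function.iterate_succ_apply']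
  rcases hg with h | h | h
  · subst h
    rw [derivative_X]
    rw [show X * derivative f + C ((1 - (k : ℂ)) / 2) * 1 * f
        = X * derivative f + C ((1 - (k : ℂ)) / 2) * f by ring,
      aux_X k ((1 - (k : ℂ)) / 2) f, hcomm,
      show (1 - (k : ℂ)) / 2 + k = (1 + (k : ℂ)) / 2 by ring]
    ring
  · subst h
    have hd : derivative (X ^ 2 : Polynomial ℂ) = C 2 * X := by
      rw [derivative_X_pow]
      norm_num
    rw [hd,
      show X ^ 2 * derivative f + C ((1 - (k : ℂ)) / 2) * (C 2 * X) * f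
        = X ^ 2 * derivative f + C (1 - (k : ℂ)) * X * f by
          rw [← mul_assoc, ← C_mul]; norm_num,
      aux_X2 k (1 - (k : ℂ)) f, hcomm,
      show ((k : ℂ) * ((1 - (k : ℂ)) + ((k : ℂ) - 1))) = 0 by ring,
      show C ((1 + (k : ℂ)) / 2) * (C 2 * X) = C (1 + (k : ℂ)) * X by
        rw [← mul_assoc, ← C_mul]; norm_num,
      show (1 - (k : ℂ) + 2 * k) = (1 + (k : ℂ)) by ring]
    simp
  · subst h
    simp [hcomm]
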